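/- The Paley tournament ST_7 has exactly 21 maximal transitive subtournaments (equivalently, exactly 21 minimal feedback vertex sets): each vertex is the source of exactly 3 distinct maximal transitive triangles. -/

import Mathlib

/-- A set `W` of vertices is acyclic if the digraph `r` restricted to `W`
has no directed cycle (the transitive closure restricted to `W` is irreflexive). -/
def AcyclicOn {V : Type*} (r : V → V → Prop) (W : Set V) : Prop :=
  ∀ v : V, ¬ Relation.TransGen (fun a b => a ∈ W ∧ b ∈ W ∧ r a b) v v

/-- A tournament: an irreflexive relation with exactly one arc between
every pair of distinct vertices. -/
def IsTournament {V : Type*} (r : V → V → Prop) : Prop :=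
  (∀ v : V, ¬ r v v) ∧ ∀ u v : V, u ≠ v → (r u v ↔ ¬ r v u)

/-- A feedback vertex set: its deletion leaves an acyclic digraph. -/
def IsFVS {V : Type*} (r : V → V → Prop) (F : Set V) : Prop :=
  AcyclicOn r Fᶜ

/-- A minimal feedback vertex set. -/
def IsMinimalFVS {V : Type*} (r : V → V → Prop) (F : Set V) : Prop :=
  IsFVS r F ∧ ∀ F' : Set V, F' ⊆ F → IsFVS r F' → F' = F

/-- A feedback vertex set of the subtournament induced on `S`. -/
def IsFVSOn {V : Type*} (r : V → V → Prop) (S F : Set V) : Prop :=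
  F ⊆ S ∧ AcyclicOn r (S \ F)

/-- A minimal feedback vertex set of the subtournament induced on `S`. -/
def IsMinimalFVSOn {V : Type*} (r : V → V → Prop) (S F : Set V) : Prop :=
  IsFVSOn r S F ∧ ∀ F' : Set V, F' ⊆ F → IsFVSOn r S F' → F' = F

/-- Strong (strongly connected): a directed path between any ordered pair. -/
def IsStrong {V : Type*} (r : V → V → Prop) : Prop :=
  ∀ u v : V, Relation.ReflTransGen r u v

/-- The subtournament induced on `S` is strong. -/
def IsStrongOn {V : Type*} (r : V → V → Prop) (S : Set V) : Prop :=
  ∀ u ∈ S, ∀ v ∈ S, Relation.ReflTransGen (fun a b => a ∈ S ∧ b ∈ S ∧ r a b) u v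

/-- The score (out-degree) of a vertex. -/
noncomputable def outScore {V : Type*} (r : V → V → Prop) (v : V) : ℕ :=
  {u : V | r v u}.ncard

/-- The number of minimal feedback vertex sets of a tournament. -/
noncomputable def fvsCount (V : Type*) (r : V → V → Prop) : ℕ :=
  {F : Set V | IsMinimalFVS r F}.ncard

/-- `maxMinFVS n` = maximum number of minimal FVSs over all `n`-vertex tournaments. -/
noncomputable def maxMinFVS (n : ℕ) : ℕ :=
  sSup {k : ℕ | ∃ r : Fin n → Fin n → Prop, IsTournament r ∧ fvsCount (Fin n) r = k}


/-- The Paley tournament of order 7: arc from `i` to `j` iff `(j-i) mod 7 ∈ {1,2,4}`. -/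
def ST7 (i j : ZMod 7) : Prop := (j - i).val ∈ ({1, 2, 4} : Set ℕ)

instance : DecidableRel ST7 := fun i j =>
  decidable_of_iff ((j - i).val = 1 ∨ (j - i).val = 2 ∨ (j - i).val = 4) (by
    simp [ST7, Set.mem_insert_iff])

lemma st7_tour : IsTournament ST7 := by
  constructor
  · decide
  · decide

section general
variable {V : Type*} {r : V → V → Prop}

lemma acyclic_mono {W X : Set V} (h : W ⊆ X) (hX : AcyclicOn r X) : AcyclicOn r W := by
  intro v hv
  exact hX v (Relation.TransGen.mono (fun a b ⟨ha, hb, hr⟩ => ⟨h ha, h hb, hr⟩) _ _ hv)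

lemma acyclic_noCyc {W : Set V} (hW : AcyclicOn r W) :
    ∀ a ∈ W, ∀ b ∈ W, ∀ c ∈ W, ¬ (r a b ∧ r b c ∧ r c a) := by
  rintro a ha b hb c hc ⟨h1, h2, h3⟩
  exact hW a (Relation.TransGen.head ⟨ha, hb, h1⟩
    (Relation.TransGen.head ⟨hb, hc, h2⟩ (Relation.TransGen.single ⟨hc, ha, h3⟩)))

lemma noCyc_acyclic [DecidableEq V] [DecidableRel r] (ht : IsTournament r) (s : Finset V)
    (hs : ∀ a ∈ s, ∀ b ∈ s, ∀ c ∈ s, ¬ (r a b ∧ r b c ∧ r c a)) :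
    AcyclicOn r (↑s : Set V) := by
  set f : V → ℕ := fun v => (s.filter (fun u => r u v)).card with hf
  have key : ∀ a b : V, a ∈ (↑s : Set V) → b ∈ (↑s : Set V) → r a b → f a < f b := by
    intro a b ha hb hab
    simp only [Finset.mem_coe] at ha hb
    have hne : a ≠ b := fun h => ht.1 a (h ▸ hab)
    apply Finset.card_lt_card
    have hsub : s.filter (fun u => r u a) ⊆ s.filter (fun u => r u b) := by
      intro u hu
      simp only [Finset.mem_filter] at hu ⊢
      refine ⟨hu.1, ?_⟩
      by_cases hub : u = b
      · exact absurd ((ht.2 a b hne).mp hab) (fun h => h (hub ▸ hu.2))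
      · by_contra hnb
        have hbu : r b u := by
          have := ht.2 u b hub
          tauto
        exact hs b hb u hu.1 a ha ⟨hbu, hu.2, hab⟩
    rw [Finset.ssubset_iff_of_subset hsub]
    exact ⟨a, Finset.mem_filter.mpr ⟨ha, hab⟩, fun h => ht.1 a (Finset.mem_filter.mp h).2⟩
  intro v hv
  have mono : ∀ x y, Relation.TransGen
      (fun a b => a ∈ (↑s : Set V) ∧ b ∈ (↑s : Set V) ∧ r a b) x y → f x < f y := by
    intro x y h
    induction h with
    | single h => exact key _ _ h.1 h.2.1 h.2.2
    | tail _ h ih => exact ih.trans (key _ _ h.1 h.2.1 h.2.2)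
  exact absurd (mono v v hv) (lt_irrefl _)

end general

/-- decidable "no cyclic triple" predicate on finsets -/
def NoCycF (s : Finset (ZMod 7)) : Prop :=
  ∀ a ∈ s, ∀ b ∈ s, ∀ c ∈ s, ¬ (ST7 a b ∧ ST7 b c ∧ ST7 c a)

instance : DecidablePred NoCycF := fun s => by unfold NoCycF; infer_instance

def QF (s : Finset (ZMod 7)) : Prop :=
  NoCycF s ∧ ∀ v : ZMod 7, v ∉ s → ¬ NoCycF (insert v s)

instance : DecidablePred QF := fun s => by unfold QF; infer_instance

lemma acyclic_iff_noCycF (s : Finset (ZMod 7)) :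
    AcyclicOn ST7 (↑s : Set (ZMod 7)) ↔ NoCycF s := by
  constructor
  · intro h a ha b hb c hc
    exact acyclic_noCyc h a ha b hb c hc
  · intro h
    exact noCyc_acyclic st7_tour s h

/-- A set is acyclic iff its toFinset satisfies NoCycF -/
lemma maxAcyclic_iff (W : Set (ZMod 7)) :
    (AcyclicOn ST7 W ∧ ∀ X : Set (ZMod 7), W ⊆ X → AcyclicOn ST7 X → X = W)
      ↔ ∃ s : Finset (ZMod 7), QF s ∧ W = ↑s := by
  constructor
  · rintro ⟨h1, h2⟩
    refine ⟨W.toFinite.toFinset, ⟨?_, ?_⟩, (Set.Finite.coe_toFinset _).symm⟩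
    · intro a ha b hb c hc
      rw [Set.Finite.mem_toFinset] at ha hb hc
      exact acyclic_noCyc h1 a ha b hb c hc
    · intro v hv hnc
      have hac : AcyclicOn ST7 (↑(insert v W.toFinite.toFinset) : Set (ZMod 7)) :=
        (acyclic_iff_noCycF _).mpr hnc
      have hsub : W ⊆ ↑(insert v W.toFinite.toFinset) := by
        intro x hx
        simp [Set.Finite.mem_toFinset, hx]
      have := h2 _ hsub hac
      apply hv
      rw [Set.Finite.mem_toFinset]
      rw [← this]
      simp
  · rintro ⟨s, ⟨hnc, hmax⟩, rfl⟩
    refine ⟨(acyclic_iff_noCycF s).mpr hnc, ?_⟩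
    intro X hX hXac
    refine Set.Subset.antisymm ?_ hX
    intro v hv
    by_contra hvs
    rw [Finset.mem_coe] at hvs
    apply hmax v hvs
    have hsub : (↑(insert v s) : Set (ZMod 7)) ⊆ X := by
      intro x hx
      rcases Finset.mem_insert.mp (Finset.mem_coe.mp hx) with h | h
      · exact h ▸ hv
      · exact hX (Finset.mem_coe.mpr h)
    exact (acyclic_iff_noCycF _).mp (acyclic_mono hsub hXac)

lemma minFVS_iff (F : Set (ZMod 7)) :
    IsMinimalFVS ST7 F ↔
      (AcyclicOn ST7 Fᶜ ∧ ∀ X : Set (ZMod 7), Fᶜ ⊆ X → AcyclicOn ST7 X → X = Fᶜ) := by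
  constructor
  · rintro ⟨h1, h2⟩
    refine ⟨h1, fun X hX hXac => ?_⟩
    have hsub : Xᶜ ⊆ F := Set.compl_subset_comm.mpr hX
    have : Xᶜ = F := h2 Xᶜ hsub (by rw [IsFVS, compl_compl]; exact hXac)
    rw [← this, compl_compl]
  · rintro ⟨h1, h2⟩
    refine ⟨h1, fun F' hF' hF'fvs => ?_⟩
    have : F'ᶜ = Fᶜ := h2 F'ᶜ (Set.compl_subset_compl.mpr hF') hF'fvs
    have := congrArg compl this
    simpa using this

/-- `ST_7` has exactly 21 maximal transitive subtournaments, equivalently exactly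
21 minimal feedback vertex sets; each vertex is the source of exactly 3 of the
maximal transitive (triangle) vertex sets. -/
theorem stmt9 :
    {W : Set (ZMod 7) | AcyclicOn ST7 W ∧
      ∀ X : Set (ZMod 7), W ⊆ X → AcyclicOn ST7 X → X = W}.ncard = 21 ∧
    {F : Set (ZMod 7) | IsMinimalFVS ST7 F}.ncard = 21 ∧
    ∀ v : ZMod 7,
      {W : Set (ZMod 7) | (AcyclicOn ST7 W ∧
          (∀ X : Set (ZMod 7), W ⊆ X → AcyclicOn ST7 X → X = W)) ∧
        v ∈ W ∧ ∀ u ∈ W, u ≠ v → ST7 v u}.ncard = 3 := by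
  have hset : {W : Set (ZMod 7) | AcyclicOn ST7 W ∧
      ∀ X : Set (ZMod 7), W ⊆ X → AcyclicOn ST7 X → X = W}
      = (fun s : Finset (ZMod 7) => (↑s : Set (ZMod 7))) '' ↑(Finset.univ.filter QF) := by
    ext W
    rw [Set.mem_setOf_eq, maxAcyclic_iff]
    simp only [Set.mem_image, Finset.mem_coe, Finset.mem_filter, Finset.mem_univ, true_and]
    exact ⟨fun ⟨s, hq, he⟩ => ⟨s, hq, he.symm⟩, fun ⟨s, hq, he⟩ => ⟨s, hq, he.symm⟩⟩
  have hcard1 : (Finset.univ.filter QF).card = 21 := by decide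
  have h1 : {W : Set (ZMod 7) | AcyclicOn ST7 W ∧
      ∀ X : Set (ZMod 7), W ⊆ X → AcyclicOn ST7 X → X = W}.ncard = 21 := by
    rw [hset, Set.ncard_image_of_injective _ Finset.coe_injective,
      Set.ncard_coe_finset, hcard1]
  refine ⟨h1, ?_, ?_⟩
  · have : {F : Set (ZMod 7) | IsMinimalFVS ST7 F}
        = compl '' {W : Set (ZMod 7) | AcyclicOn ST7 W ∧
            ∀ X : Set (ZMod 7), W ⊆ X → AcyclicOn ST7 X → X = W} := by
      ext F
      rw [Set.mem_setOf_eq, minFVS_iff]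
      constructor
      · intro h
        exact ⟨Fᶜ, h, compl_compl F⟩
      · rintro ⟨W, hW, rfl⟩
        rw [compl_compl]
        exact hW
    rw [this, Set.ncard_image_of_injective _ compl_injective, h1]
  · have hcard3 : ∀ v : ZMod 7, (Finset.univ.filter
        (fun s => QF s ∧ v ∈ s ∧ ∀ u ∈ s, u ≠ v → ST7 v u)).card = 3 := by decide
    intro v
    have hset2 : {W : Set (ZMod 7) | (AcyclicOn ST7 W ∧
          (∀ X : Set (ZMod 7), W ⊆ X → AcyclicOn ST7 X → X = W)) ∧
        v ∈ W ∧ ∀ u ∈ W, u ≠ v → ST7 v u}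
        = (fun s : Finset (ZMod 7) => (↑s : Set (ZMod 7))) ''
          ↑(Finset.univ.filter (fun s => QF s ∧ v ∈ s ∧ ∀ u ∈ s, u ≠ v → ST7 v u)) := by
      ext W
      rw [Set.mem_setOf_eq]
      simp only [Set.mem_image, Finset.mem_coe, Finset.mem_filter, Finset.mem_univ, true_and]
      constructor
      · rintro ⟨hmax, hv, hsrc⟩
        obtain ⟨s, hq, rfl⟩ := (maxAcyclic_iff W).mp hmax
        exact ⟨s, ⟨hq, hv, fun u hu => hsrc u hu⟩, rfl⟩
      · rintro ⟨s, ⟨hq, hv, hsrc⟩, rfl⟩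
        exact ⟨(maxAcyclic_iff _).mpr ⟨s, hq, rfl⟩, hv, fun u hu => hsrc u hu⟩
    rw [hset2, Set.ncard_image_of_injective _ Finset.coe_injective, Set.ncard_coe_finset]
    exact hcard3 v
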